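/- For every fair division instance with n agents and m goods in which each agent i has an additive valuation v_i, there exists an MMS multi-allocation A = (A_1,…,A_n) whose characteristic vector satisfies ‖χ^A‖_∞ ≤ 2 and ‖χ^A‖_1 ≤ 2m; that is, every agent i receives a bundle with v_i(A_i) ≥ μ_i, no single good is assigned to more than 2 agents, and the total number of goods assigned (counted with copies) is at most 2m. -/

import Mathlib

open Finset

/-- `X : Fin n → Finset α` is a partition of the (finite) ground set `α` into `n`
(possibly empty) pairwise disjoint parts whose union is everything. -/
def IsPartition {α : Type*} [DecidableEq α] [Fintype α] {n : ℕ}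
    (X : Fin n → Finset α) : Prop :=
  (∀ i j : Fin n, i ≠ j → Disjoint (X i) (X j)) ∧
    Finset.univ.biUnion X = Finset.univ

/-- The maximin share of an agent with valuation `v` among `n` agents. -/
noncomputable def mmsShare {m : ℕ} (n : ℕ) (v : Finset (Fin m) → NNReal) : NNReal :=
  sSup {x : NNReal | ∃ X : Fin n → Finset (Fin m), IsPartition X ∧ x = ⨅ j, v (X j)}

section Aux
variable {m : ℕ}

def HasPart (w : Finset (Fin m) → NNReal) (c : NNReal) (r : ℕ) (R : Finset (Fin m)) : Prop :=
  ∃ X : Fin r → Finset (Fin m),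
    (∀ k l, k ≠ l → Disjoint (X k) (X l)) ∧ Finset.univ.biUnion X = R ∧ ∀ k, c ≤ w (X k)

variable {w : Finset (Fin m) → NNReal} (hw : ∀ S, w S = ∑ g ∈ S, w {g})
include hw

lemma w_empty : w ∅ = 0 := by rw [hw]; simp

lemma w_mono {S T : Finset (Fin m)} (h : S ⊆ T) : w S ≤ w T := by
  rw [hw S, hw T]; exact Finset.sum_le_sum_of_subset h

lemma w_union {S T : Finset (Fin m)} (h : Disjoint S T) : w (S ∪ T) = w S + w T := by
  rw [hw (S ∪ T), hw S, hw T, Finset.sum_union h]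

lemma w_split {B R : Finset (Fin m)} (h : B ⊆ R) : w R = w (R \ B) + w B := by
  rw [← w_union hw (Finset.sdiff_disjoint), Finset.sdiff_union_of_subset h]

omit hw in
/-- pushing a partition along a map of index sets. -/
lemma part_map {r r' : ℕ} (h : Fin r → Fin r') (X : Fin r → Finset (Fin m))
    (hdisj : ∀ k l, k ≠ l → Disjoint (X k) (X l)) :
    (∀ j l, j ≠ l → Disjoint ((Finset.univ.filter (fun k => h k = j)).biUnion X)
      ((Finset.univ.filter (fun k => h k = l)).biUnion X)) ∧
    Finset.univ.biUnion (fun j => (Finset.univ.filter (fun k => h k = j)).biUnion X)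
      = Finset.univ.biUnion X := by
  constructor
  · intro j l hjl
    rw [Finset.disjoint_left]
    intro a ha ha'
    simp only [Finset.mem_biUnion, Finset.mem_filter, Finset.mem_univ, true_and] at ha ha'
    obtain ⟨k, hk, hak⟩ := ha
    obtain ⟨k', hk', hak'⟩ := ha'
    rcases eq_or_ne k k' with rfl | hne
    · exact hjl (hk ▸ hk' ▸ rfl)
    · exact (Finset.disjoint_left.1 (hdisj k k' hne)) hak hak'
  · ext a
    simp only [Finset.mem_biUnion, Finset.mem_filter, Finset.mem_univ, true_and]
    constructor
    · rintro ⟨j, k, hk, hak⟩; exact ⟨k, hak⟩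
    · rintro ⟨k, hak⟩; exact ⟨h k, k, rfl, hak⟩

lemma haspart_shrink {c : NNReal} {r r' : ℕ} {R : Finset (Fin m)}
    (hp : HasPart w c r R) (h1 : 0 < r') (h2 : r' ≤ r) : HasPart w c r' R := by
  obtain ⟨X, hdisj, hcov, hval⟩ := hp
  have hr : 0 < r := lt_of_lt_of_le h1 h2
  set f : Fin r → Fin r' := fun k => ⟨min k (r' - 1), by omega⟩ with hf
  obtain ⟨hd, hc⟩ := part_map f X hdisj
  refine ⟨_, hd, hc.trans hcov, ?_⟩
  intro j
  have hmem : (⟨(j : ℕ), by omega⟩ : Fin r) ∈ Finset.univ.filter (fun k => f k = j) := by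
    simp only [Finset.mem_filter, Finset.mem_univ, true_and, hf]
    apply Fin.ext
    simp only []
    have : (j : ℕ) ≤ r' - 1 := by omega
    simpa [min_eq_left this]
  calc c ≤ w (X ⟨(j : ℕ), by omega⟩) := hval _
    _ ≤ w _ := w_mono hw (Finset.subset_biUnion_of_mem X hmem)

lemma haspart_double {c : NNReal} {r u : ℕ} {R : Finset (Fin m)}
    (hp : HasPart w c r R) (h1 : 0 < u) (h2 : 2 * u ≤ r) : HasPart w (c + c) u R := by
  obtain ⟨X, hdisj, hcov, hval⟩ := hp
  set f : Fin r → Fin u := fun k => ⟨min (k / 2) (u - 1), by omega⟩ with hf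
  obtain ⟨hd, hc⟩ := part_map f X hdisj
  refine ⟨_, hd, hc.trans hcov, ?_⟩
  intro j
  have hj1 : (2 * (j : ℕ)) < r := by omega
  have hj2 : (2 * (j : ℕ) + 1) < r := by omega
  set k1 : Fin r := ⟨2 * j, hj1⟩
  set k2 : Fin r := ⟨2 * j + 1, hj2⟩
  have hk12 : k1 ≠ k2 := by simp [k1, k2, Fin.ext_iff]
  have hm1 : k1 ∈ Finset.univ.filter (fun k => f k = j) := by
    simp only [Finset.mem_filter, Finset.mem_univ, true_and, hf]
    apply Fin.ext; simp only [k1]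
    have : (2 * (j : ℕ)) / 2 = j := by omega
    rw [this]
    have : (j : ℕ) ≤ u - 1 := by omega
    simpa [min_eq_left this]
  have hm2 : k2 ∈ Finset.univ.filter (fun k => f k = j) := by
    simp only [Finset.mem_filter, Finset.mem_univ, true_and, hf]
    apply Fin.ext; simp only [k2]
    have : (2 * (j : ℕ) + 1) / 2 = j := by omega
    rw [this]
    have : (j : ℕ) ≤ u - 1 := by omega
    simpa [min_eq_left this]
  have hsub : X k1 ∪ X k2 ⊆ (Finset.univ.filter (fun k => f k = j)).biUnion X := by
    apply Finset.union_subset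
    · exact Finset.subset_biUnion_of_mem X hm1
    · exact Finset.subset_biUnion_of_mem X hm2
  calc c + c ≤ w (X k1) + w (X k2) := add_le_add (hval _) (hval _)
    _ = w (X k1 ∪ X k2) := (w_union hw (hdisj _ _ hk12)).symm
    _ ≤ w _ := w_mono hw hsub

/-- removing one good and one part. -/
lemma haspart_erase {c : NNReal} {r : ℕ} {R : Finset (Fin m)} (g : Fin m)
    (hp : HasPart w c (r + 1) R) (hr : 0 < r) : HasPart w c r (R.erase g) := by
  obtain ⟨X, hdisj, hcov, hval⟩ := hp
  have hex : ∃ k0 : Fin (r+1), ∀ k, g ∈ X k → k = k0 := by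
    by_cases h : ∃ k, g ∈ X k
    · obtain ⟨k0, hk0⟩ := h
      refine ⟨k0, fun k hk => ?_⟩
      by_contra hne
      exact (Finset.disjoint_left.1 (hdisj k k0 hne)) hk hk0
    · exact ⟨Fin.last r, fun k hk => absurd ⟨k, hk⟩ h⟩
  obtain ⟨k0, hk0⟩ := hex
  set e := Equiv.swap k0 (Fin.last r) with he
  set X' : Fin (r+1) → Finset (Fin m) := fun k => X (e k) with hX'
  have hdisj' : ∀ k l, k ≠ l → Disjoint (X' k) (X' l) := fun k l hkl =>
    hdisj _ _ (fun hh => hkl (e.injective hh))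
  have hcov' : Finset.univ.biUnion X' = R := by
    rw [← hcov]
    ext a
    simp only [Finset.mem_biUnion, Finset.mem_univ, true_and, hX']
    exact ⟨fun ⟨k, hk⟩ => ⟨e k, hk⟩, fun ⟨k, hk⟩ => ⟨e.symm k, by simpa using hk⟩⟩
  have hnotin : ∀ j : Fin r, g ∉ X' (Fin.castSucc j) := by
    intro j hg
    have h1 : e (Fin.castSucc j) = k0 := hk0 _ hg
    have h2 : Fin.castSucc j = Fin.last r := by
      have : e (e (Fin.castSucc j)) = Fin.castSucc j := Equiv.swap_apply_self _ _ _
      rw [h1] at this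
      rw [← this, he, Equiv.swap_apply_left]
    exact absurd h2 (Fin.ne_last_of_lt (Fin.castSucc_lt_last j))
  set f : Fin (r+1) → Fin r := fun k => ⟨min k (r - 1), by omega⟩ with hf
  obtain ⟨hd, hc⟩ := part_map f X' hdisj'
  refine ⟨fun j => ((Finset.univ.filter (fun k => f k = j)).biUnion X').erase g, ?_, ?_, ?_⟩
  · intro j l hjl
    exact Finset.disjoint_of_subset_left (Finset.erase_subset _ _)
      (Finset.disjoint_of_subset_right (Finset.erase_subset _ _) (hd j l hjl))
  · ext a
    simp only [Finset.mem_biUnion, Finset.mem_univ, true_and, Finset.mem_erase]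
    constructor
    · rintro ⟨j, hag, haj⟩
      refine ⟨hag, ?_⟩
      rw [← hcov']
      have : a ∈ Finset.univ.biUnion (fun j => (Finset.univ.filter (fun k => f k = j)).biUnion X') := by
        simp only [Finset.mem_biUnion, Finset.mem_univ, true_and]
        exact ⟨j, haj⟩
      rw [hc] at this
      simpa using this
    · rintro ⟨hag, haR⟩
      rw [← hcov'] at haR
      have : a ∈ Finset.univ.biUnion (fun j => (Finset.univ.filter (fun k => f k = j)).biUnion X') := by
        rw [hc]; simpa using haR
      simp only [Finset.mem_biUnion, Finset.mem_univ, true_and] at this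
      obtain ⟨j, hj⟩ := this
      exact ⟨j, hag, hj⟩
  · intro j
    have hmem : Fin.castSucc j ∈ Finset.univ.filter (fun k => f k = j) := by
      simp only [Finset.mem_filter, Finset.mem_univ, true_and, hf]
      apply Fin.ext
      simp only [Fin.coe_castSucc]
      have hj : (j : ℕ) ≤ r - 1 := by omega
      simp [min_eq_left hj]
    have hsub : X' (Fin.castSucc j) ⊆ ((Finset.univ.filter (fun k => f k = j)).biUnion X').erase g := by
      intro a ha
      rw [Finset.mem_erase]
      exact ⟨fun hag => hnotin j (hag ▸ ha), Finset.subset_biUnion_of_mem X' hmem ha⟩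
    calc c ≤ w (X' (Fin.castSucc j)) := hval _
      _ ≤ _ := w_mono hw hsub

/-- total value of `R` is at least `r • c`. -/
lemma haspart_total {c : NNReal} {r : ℕ} {R : Finset (Fin m)}
    (hp : HasPart w c r R) : r • c ≤ w R := by
  obtain ⟨X, hdisj, hcov, hval⟩ := hp
  have : w R = ∑ k : Fin r, w (X k) := by
    rw [← hcov, hw]
    rw [Finset.sum_biUnion ?h]
    · exact Finset.sum_congr rfl (fun k _ => (hw (X k)).symm)
    · intro k _ l _ hkl
      exact hdisj k l hkl
  rw [this]
  calc r • c = ∑ _k : Fin r, c := by simp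
    _ ≤ ∑ k : Fin r, w (X k) := Finset.sum_le_sum (fun k _ => hval k)


end Aux

section Bag
variable {n m : ℕ} (v : Fin n → Finset (Fin m) → NNReal)
  (hadd : ∀ i, ∀ S : Finset (Fin m), v i S = ∑ g ∈ S, v i {g})
  (t : Fin n → NNReal)

include hadd

/-- Bag filling: serve agents greedily with inclusion-minimal bags; every
unserved agent certifies that `R` was cheap. -/
lemma bag1 : ∀ (k : ℕ) (I : Finset (Fin n)) (R : Finset (Fin m)), I.card = k →
    (∀ i ∈ I, 0 < t i) → (∀ i ∈ I, ∀ g ∈ R, v i {g} < t i) →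
    ∃ (A : Fin n → Finset (Fin m)) (S : Finset (Fin n)),
      S ⊆ I ∧
      (∀ j ∈ I, j ∉ S → v j R < (2 * S.card + 1) • t j) ∧
      (∀ i ∈ S, A i ⊆ R ∧ t i ≤ v i (A i)) ∧
      (∀ i, i ∉ S → A i = ∅) ∧
      (∀ i j, i ≠ j → Disjoint (A i) (A j)) := by
  intro k
  induction k using Nat.strong_induction_on with
  | _ k IH =>
    intro I R hcard hpos hsmall
    by_cases hall : ∀ i ∈ I, v i R < t i
    · refine ⟨fun _ => ∅, ∅, Finset.empty_subset _, ?_, by simp, fun _ _ => rfl, by simp⟩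
      intro j hj _
      simpa using hall j hj
    · push_neg at hall
      obtain ⟨i0, hi0I, hi0⟩ := hall
      have hk : 0 < k := by
        rw [← hcard]; exact Finset.card_pos.2 ⟨i0, hi0I⟩
      -- minimal bag
      set 𝒮 := R.powerset.filter (fun B => ∃ i ∈ I, t i ≤ v i B) with h𝒮
      have hRin : R ∈ 𝒮 := by
        simp only [h𝒮, Finset.mem_filter, Finset.mem_powerset]
        exact ⟨Finset.Subset.refl R, i0, hi0I, hi0⟩
      obtain ⟨B, hB𝒮, hBmin⟩ : ∃ B ∈ 𝒮, ∀ x ∈ 𝒮, ¬ x < B := by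
        obtain ⟨B, hB⟩ := Finset.exists_minimal (show 𝒮.Nonempty from ⟨R, hRin⟩)
        exact ⟨B, hB.1, fun x hx hlt => hlt.not_ge (hB.2 hx hlt.le)⟩
      simp only [h𝒮, Finset.mem_filter, Finset.mem_powerset] at hB𝒮
      obtain ⟨hBR, istar, histar, hist⟩ := hB𝒮
      have hBne : B.Nonempty := by
        rcases Finset.eq_empty_or_nonempty B with rfl | h
        · exfalso
          have : v istar ∅ = 0 := by rw [hadd]; simp
          rw [this] at hist
          exact absurd (le_antisymm hist (zero_le)) (ne_of_gt (hpos istar histar))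
        · exact h
      obtain ⟨g, hgB⟩ := hBne
      have hBsmall : ∀ j ∈ I, v j (B.erase g) < t j := by
        intro j hj
        by_contra hge
        push_neg at hge
        have hmem : B.erase g ∈ 𝒮 := by
          simp only [h𝒮, Finset.mem_filter, Finset.mem_powerset]
          exact ⟨(Finset.erase_subset _ _).trans hBR, j, hj, hge⟩
        exact hBmin _ hmem (Finset.erase_ssubset hgB)
      have hBval : ∀ j ∈ I, v j B < t j + t j := by
        intro j hj
        have hsplit : v j B = v j (B.erase g) + v j {g} := by
          have h1 : ({g} : Finset (Fin m)) ⊆ B := Finset.singleton_subset_iff.2 hgB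
          rw [hadd j B, hadd j (B.erase g), hadd j {g}, Finset.erase_eq,
            ← Finset.sum_union (Finset.sdiff_disjoint (t := B) (s := {g})),
            Finset.sdiff_union_of_subset h1]
        rw [hsplit]
        exact add_lt_add (hBsmall j hj) (hsmall j hj g (hBR hgB))
      -- recurse
      have hcard' : (I.erase istar).card = k - 1 := by
        rw [Finset.card_erase_of_mem histar, hcard]
      obtain ⟨A', S', hS'sub, hS'bound, hS'serve, hS'zero, hS'disj⟩ :=
        IH (k - 1) (by omega) (I.erase istar) (R \ B) hcard'
          (fun i hi => hpos i (Finset.mem_of_mem_erase hi))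
          (fun i hi g' hg' => hsmall i (Finset.mem_of_mem_erase hi) g' (Finset.mem_sdiff.1 hg').1)
      have histarS' : istar ∉ S' := fun h => Finset.notMem_erase istar I (hS'sub h)
      refine ⟨fun x => if x = istar then B else A' x, insert istar S', ?_, ?_, ?_, ?_, ?_⟩
      · exact Finset.insert_subset histar (hS'sub.trans (Finset.erase_subset _ _))
      · intro j hjI hjS
        have hjne : j ≠ istar := fun h => hjS (h ▸ Finset.mem_insert_self _ _)
        have hjS' : j ∉ S' := fun h => hjS (Finset.mem_insert_of_mem h)
        have hjI' : j ∈ I.erase istar := Finset.mem_erase.2 ⟨hjne, hjI⟩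
        have h1 : v j (R \ B) < (2 * S'.card + 1) • t j := hS'bound j hjI' hjS'
        have h2 : v j R = v j (R \ B) + v j B := by
          rw [hadd j R, hadd j (R \ B), hadd j B,
            ← Finset.sum_union (Finset.sdiff_disjoint (t := R) (s := B)),
            Finset.sdiff_union_of_subset hBR]
        have hcards : (insert istar S').card = S'.card + 1 :=
          Finset.card_insert_of_notMem histarS'
        have harith : (2 * (insert istar S').card + 1) • t j
            = (2 * S'.card + 1) • t j + (t j + t j) := by
          rw [hcards]
          rw [show 2 * (S'.card + 1) + 1 = (2 * S'.card + 1) + 2 by ring, add_nsmul]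
          congr 1
          rw [two_nsmul]
        rw [h2, harith]
        exact add_lt_add h1 (hBval j hjI)
      · intro i hi
        rcases Finset.mem_insert.1 hi with rfl | hiS'
        · simp only [if_pos rfl]
          exact ⟨hBR, hist⟩
        · have hne : i ≠ istar := fun h => histarS' (h ▸ hiS')
          simp only [if_neg hne]
          obtain ⟨h1, h2⟩ := hS'serve i hiS'
          exact ⟨h1.trans (Finset.sdiff_subset), h2⟩
      · intro i hi
        have hne : i ≠ istar := fun h => hi (h ▸ Finset.mem_insert_self _ _)
        simp only [if_neg hne]
        exact hS'zero i (fun h => hi (Finset.mem_insert_of_mem h))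
      · intro i j hij
        have hBdisj : ∀ x, x ≠ istar → Disjoint B (A' x) := by
          intro x hx
          by_cases hxS : x ∈ S'
          · exact Finset.disjoint_of_subset_right (hS'serve x hxS).1 Finset.disjoint_sdiff
          · rw [hS'zero x hxS]; exact Finset.disjoint_empty_right _
        by_cases hi : i = istar <;> by_cases hj : j = istar
        · exact absurd (hi.trans hj.symm) hij
        · subst hi
          simp only [if_pos rfl, if_neg hj]
          exact hBdisj j hj
        · subst hj
          simp only [if_pos rfl, if_neg hi]
          exact (hBdisj i hi).symm
        · simp only [if_neg hi, if_neg hj]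
          exact hS'disj i j hij

end Bag

section Red
variable {m n : ℕ} (v : Fin n → Finset (Fin m) → NNReal)
  (hadd : ∀ i, ∀ S : Finset (Fin m), v i S = ∑ g ∈ S, v i {g})
  (t : Fin n → NNReal)

include hadd

lemma redbag (c : Fin n → NNReal) :
    ∀ (r : ℕ) (I : Finset (Fin n)) (R : Finset (Fin m)), I.card = r →
    (∀ i ∈ I, 0 < t i) → (∀ i ∈ I, t i ≤ c i) → (∀ i ∈ I, c i ≤ t i + t i) →
    (∀ i ∈ I, HasPart (v i) (c i) r R) →
    ∃ (A : Fin n → Finset (Fin m)) (U : Finset (Fin n)),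
      U ⊆ I ∧
      (∀ j ∈ U, r • c j < (2 * (r - U.card) + 1) • t j) ∧
      (∀ i ∈ I, i ∉ U → A i ⊆ R ∧ t i ≤ v i (A i)) ∧
      (∀ i, ¬ (i ∈ I ∧ i ∉ U) → A i = ∅) ∧
      (∀ i j, i ≠ j → Disjoint (A i) (A j)) := by
  intro r
  induction r with
  | zero =>
    intro I R hcard _ _ _ _
    have hI : I = ∅ := Finset.card_eq_zero.1 hcard
    subst hI
    exact ⟨fun _ => ∅, ∅, Finset.Subset.refl _, by simp, by simp, fun _ _ => rfl, by simp⟩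
  | succ rr IH =>
    intro I R hcard hpos hlc huc hp
    by_cases hbig : ∃ i ∈ I, ∃ g ∈ R, t i ≤ v i {g}
    · obtain ⟨i1, hi1I, g, hgR, hval⟩ := hbig
      have hcard' : (I.erase i1).card = rr := by
        rw [Finset.card_erase_of_mem hi1I, hcard]; omega
      have hp' : ∀ j ∈ I.erase i1, HasPart (v j) (c j) rr (R.erase g) := by
        intro j hj
        have hrr : 0 < rr := by
          rw [← hcard']
          exact Finset.card_pos.2 ⟨j, hj⟩
        exact haspart_erase (hadd j) g (hp j (Finset.mem_of_mem_erase hj)) hrr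
      obtain ⟨A', U', hU'sub, hU'bound, hserve', hzero', hdisj'⟩ :=
        IH (I.erase i1) (R.erase g) hcard'
          (fun i hi => hpos i (Finset.mem_of_mem_erase hi))
          (fun i hi => hlc i (Finset.mem_of_mem_erase hi))
          (fun i hi => huc i (Finset.mem_of_mem_erase hi)) hp'
      have hi1U' : i1 ∉ U' := fun h => Finset.notMem_erase i1 I (hU'sub h)
      refine ⟨fun x => if x = i1 then {g} else A' x, U',
        hU'sub.trans (Finset.erase_subset _ _), ?_, ?_, ?_, ?_⟩
      · intro j hjU
        have hjI' : j ∈ I.erase i1 := hU'sub hjU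
        have hjI : j ∈ I := Finset.mem_of_mem_erase hjI'
        have h1 : rr • c j < (2 * (rr - U'.card) + 1) • t j := hU'bound j hjU
        have hu : U'.card ≤ rr := hcard' ▸ Finset.card_le_card hU'sub
        have harith : (2 * (rr + 1 - U'.card) + 1) • t j
            = (2 * (rr - U'.card) + 1) • t j + (t j + t j) := by
          rw [show 2 * (rr + 1 - U'.card) + 1 = (2 * (rr - U'.card) + 1) + 2 by omega,
            add_nsmul]
          congr 1
          rw [two_nsmul]
        rw [succ_nsmul, harith]
        exact add_lt_add_of_lt_of_le h1 (huc j hjI)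
      · intro i hiI hiU
        by_cases hi : i = i1
        · subst hi
          simp only [if_pos rfl]
          exact ⟨Finset.singleton_subset_iff.2 hgR, hval⟩
        · simp only [if_neg hi]
          obtain ⟨h1, h2⟩ := hserve' i (Finset.mem_erase.2 ⟨hi, hiI⟩) hiU
          exact ⟨h1.trans (Finset.erase_subset _ _), h2⟩
      · intro x hx
        have hxne : x ≠ i1 := by
          rintro rfl
          exact hx ⟨hi1I, hi1U'⟩
        simp only [if_neg hxne]
        apply hzero'
        rintro ⟨hx1, hx2⟩
        exact hx ⟨Finset.mem_of_mem_erase hx1, hx2⟩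
      · intro i j hij
        have hgdisj : ∀ x, x ≠ i1 → Disjoint ({g} : Finset (Fin m)) (A' x) := by
          intro x hx
          by_cases hmem : x ∈ I.erase i1 ∧ x ∉ U'
          · refine Finset.disjoint_singleton_left.2 (fun hgA => ?_)
            exact Finset.notMem_erase g R ((hserve' x hmem.1 hmem.2).1 hgA)
          · rw [hzero' x hmem]
            exact Finset.disjoint_empty_right _
        by_cases hi : i = i1 <;> by_cases hj : j = i1
        · exact absurd (hi.trans hj.symm) hij
        · subst hi; simp only [if_pos rfl, if_neg hj]; exact hgdisj j hj
        · subst hj; simp only [if_pos rfl, if_neg hi]; exact (hgdisj i hi).symm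
        · simp only [if_neg hi, if_neg hj]; exact hdisj' i j hij
    · push_neg at hbig
      obtain ⟨A, S, hSsub, hSbound, hSserve, hSzero, hSdisj⟩ :=
        bag1 v hadd t (rr + 1) I R hcard hpos hbig
      refine ⟨A, I \ S, Finset.sdiff_subset, ?_, ?_, ?_, hSdisj⟩
      · intro j hjU
        obtain ⟨hjI, hjS⟩ := Finset.mem_sdiff.1 hjU
        have h1 : v j R < (2 * S.card + 1) • t j := hSbound j hjI hjS
        have h2 : (rr + 1) • c j ≤ v j R := haspart_total (hadd j) (hp j hjI)
        have hcards : S.card = rr + 1 - (I \ S).card := by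
          have := Finset.card_sdiff_of_subset hSsub
          have hSle : S.card ≤ rr + 1 := hcard ▸ Finset.card_le_card hSsub
          omega
        rw [← hcards]
        exact lt_of_le_of_lt h2 h1
      · intro i hiI hiU
        have hiS : i ∈ S := by
          by_contra h
          exact hiU (Finset.mem_sdiff.2 ⟨hiI, h⟩)
        exact hSserve i hiS
      · intro x hx
        apply hSzero
        intro hxS
        exact hx ⟨hSsub hxS, fun hxU => (Finset.mem_sdiff.1 hxU).2 hxS⟩


end Red

lemma count_le_one {n m : ℕ} (A : Fin n → Finset (Fin m))
    (hd : ∀ i j, i ≠ j → Disjoint (A i) (A j)) (g : Fin m) :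
    (Finset.univ.filter (fun i => g ∈ A i)).card ≤ 1 := by
  refine Finset.card_le_one.2 (fun a ha b hb => ?_)
  simp only [Finset.mem_filter, Finset.mem_univ, true_and] at ha hb
  by_contra hne
  exact (Finset.disjoint_left.1 (hd a b hne)) ha hb

lemma sum_card_le {n m : ℕ} (A : Fin n → Finset (Fin m))
    (hd : ∀ i j, i ≠ j → Disjoint (A i) (A j)) :
    ∑ i, (A i).card ≤ m := by
  rw [← Finset.card_biUnion (fun x _ y _ h => hd x y h)]
  calc (Finset.univ.biUnion A).card ≤ (Finset.univ : Finset (Fin m)).card :=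
        Finset.card_le_card (Finset.subset_univ _)
    _ = m := by simp

lemma nsmul_lt_nsmul_cancel {a b : ℕ} {x : NNReal} (hx : 0 < x) (h : a • x < b • x) : a < b := by
  rw [nsmul_eq_mul, nsmul_eq_mul] at h
  exact_mod_cast lt_of_mul_lt_mul_right h hx.le

theorem mms_multiallocation_additive_goods
    (n m : ℕ) (hn : 0 < n) (hm : 0 < m)
    (v : Fin n → Finset (Fin m) → NNReal)
    (hadd : ∀ i, ∀ S : Finset (Fin m), v i S = ∑ g ∈ S, v i {g}) :
    ∃ A : Fin n → Finset (Fin m),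
      (∀ i, mmsShare n (v i) ≤ v i (A i)) ∧
      (∀ g : Fin m, (Finset.univ.filter (fun i => g ∈ A i)).card ≤ 2) ∧
      (∑ i, (A i).card ≤ 2 * m) := by
  classical
  set t : Fin n → NNReal := fun i => mmsShare n (v i) with ht
  -- each agent has an optimal n-partition worth ≥ t i per part
  have hopt : ∀ i, HasPart (v i) (t i) n Finset.univ := by
    intro i
    set Si := {x : NNReal | ∃ X : Fin n → Finset (Fin m), IsPartition X ∧ x = ⨅ j, v i (X j)}
      with hSi
    have hne : Si.Nonempty := by
      refine ⟨_, fun k : Fin n => if k = ⟨0, hn⟩ then Finset.univ else ∅, ⟨?_, ?_⟩, rfl⟩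
      · intro k l hkl
        by_cases hk : k = ⟨0, hn⟩ <;> by_cases hl : l = ⟨0, hn⟩
        · exact absurd (hk.trans hl.symm) hkl
        · simp only [if_pos hk, if_neg hl]; exact Finset.disjoint_empty_right _
        · simp only [if_neg hk, if_pos hl]; exact Finset.disjoint_empty_left _
        · simp only [if_neg hk, if_neg hl]; exact Finset.disjoint_empty_left _
      · ext g
        simp only [Finset.mem_biUnion, Finset.mem_univ, true_and, iff_true]
        exact ⟨⟨0, hn⟩, by simp⟩
    have hfin : Si.Finite := by
      apply Set.Finite.subset (Set.finite_range (fun X : Fin n → Finset (Fin m) => ⨅ j, v i (X j)))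
      rintro x ⟨X, _, rfl⟩
      exact ⟨X, rfl⟩
    have hmem : mmsShare n (v i) ∈ Si := by
      rw [mmsShare]
      exact hne.csSup_mem hfin
    obtain ⟨X, ⟨hXd, hXc⟩, hXv⟩ := hmem
    refine ⟨X, hXd, hXc, fun k => ?_⟩
    calc t i = ⨅ j, v i (X j) := hXv
      _ ≤ v i (X k) := ciInf_le (OrderBot.bddBelow _) k
  set Ip := Finset.univ.filter (fun i => 0 < t i) with hIp
  have htzero : ∀ i, i ∉ Ip → t i = 0 := by
    intro i hi
    simp only [hIp, Finset.mem_filter, Finset.mem_univ, true_and, not_lt] at hi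
    exact le_antisymm hi (zero_le)
  have hIpn : Ip.card ≤ n := by
    calc Ip.card ≤ (Finset.univ : Finset (Fin n)).card := Finset.card_le_card (Finset.subset_univ _)
      _ = n := by simp
  rcases Nat.eq_zero_or_pos Ip.card with h0 | hpos1
  · refine ⟨fun _ => ∅, fun i => ?_, fun g => by simp, by simp⟩
    have hi : i ∉ Ip := by
      rw [Finset.card_eq_zero.1 h0]
      exact Finset.notMem_empty i
    show t i ≤ v i ∅
    rw [htzero i hi]
    exact zero_le
  · have hshrink : ∀ i ∈ Ip, HasPart (v i) (t i) Ip.card Finset.univ :=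
      fun i _ => haspart_shrink (hadd i) (hopt i) hpos1 hIpn
    obtain ⟨A₁, U, hUsub, hUbound, hserve₁, hzero₁, hdisj₁⟩ :=
      redbag v hadd t t Ip.card Ip Finset.univ rfl
        (fun i hi => (Finset.mem_filter.1 hi).2)
        (fun _ _ => le_rfl)
        (fun i _ => le_add_of_nonneg_right (zero_le))
        hshrink
    have hUIp : U.card ≤ Ip.card := Finset.card_le_card hUsub
    have hUn : 2 * U.card ≤ n := by
      rcases Finset.eq_empty_or_nonempty U with rfl | ⟨j0, hj0⟩
      · simp
      · have hb := hUbound j0 hj0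
        have hpos : 0 < t j0 := (Finset.mem_filter.1 (hUsub hj0)).2
        have := nsmul_lt_nsmul_cancel hpos hb
        omega
    rcases Finset.eq_empty_or_nonempty U with hUe | ⟨j0, hj0⟩
    · refine ⟨A₁, fun i => ?_, ?_, ?_⟩
      · show t i ≤ v i (A₁ i)
        by_cases hi : i ∈ Ip
        · exact (hserve₁ i hi (hUe ▸ Finset.notMem_empty i)).2
        · rw [htzero i hi]; exact zero_le
      · intro g
        exact le_trans (count_le_one A₁ hdisj₁ g) one_le_two
      · calc ∑ i, (A₁ i).card ≤ m := sum_card_le A₁ hdisj₁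
          _ ≤ 2 * m := by omega
    · have hu : 0 < U.card := Finset.card_pos.2 ⟨j0, hj0⟩
      have hdouble : ∀ j ∈ U, HasPart (v j) (t j + t j) U.card Finset.univ :=
        fun j _ => haspart_double (hadd j) (hopt j) hu hUn
      obtain ⟨A₂, U₂, hU₂sub, hU₂bound, hserve₂, hzero₂, hdisj₂⟩ :=
        redbag v hadd t (fun j => t j + t j) U.card U Finset.univ rfl
          (fun i hi => (Finset.mem_filter.1 (hUsub hi)).2)
          (fun i _ => le_add_of_nonneg_right (zero_le))
          (fun _ _ => le_rfl)
          hdouble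
      have hU₂ : U₂ = ∅ := by
        rcases Finset.eq_empty_or_nonempty U₂ with h | ⟨j1, hj1⟩
        · exact h
        · exfalso
          have hb := hU₂bound j1 hj1
          have hpos : 0 < t j1 := (Finset.mem_filter.1 (hUsub (hU₂sub hj1))).2
          rw [show U.card • (t j1 + t j1) = (2 * U.card) • t j1 by
            rw [smul_add, ← add_nsmul, two_mul]] at hb
          have := nsmul_lt_nsmul_cancel hpos hb
          have h2 : U₂.card ≤ U.card := Finset.card_le_card hU₂sub
          have h3 : 0 < U₂.card := Finset.card_pos.2 ⟨j1, hj1⟩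
          omega
      refine ⟨fun i => A₁ i ∪ A₂ i, fun i => ?_, fun g => ?_, ?_⟩
      · show t i ≤ v i (A₁ i ∪ A₂ i)
        by_cases hiU : i ∈ U
        · have h1 : A₁ i = ∅ := hzero₁ i (fun h => h.2 hiU)
          have h2 := hserve₂ i hiU (hU₂ ▸ Finset.notMem_empty i)
          rw [h1, Finset.empty_union]
          exact h2.2
        · by_cases hi : i ∈ Ip
          · have h2 : A₂ i = ∅ := hzero₂ i (fun h => hiU h.1)
            rw [h2, Finset.union_empty]
            exact (hserve₁ i hi hiU).2
          · rw [htzero i hi]; exact zero_le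
      · have hsplit : (Finset.univ.filter (fun i => g ∈ A₁ i ∪ A₂ i)).card ≤
            (Finset.univ.filter (fun i => g ∈ A₁ i)).card +
            (Finset.univ.filter (fun i => g ∈ A₂ i)).card := by
          refine le_trans (Finset.card_le_card ?_) (Finset.card_union_le _ _)
          intro i hi
          simp only [Finset.mem_filter, Finset.mem_univ, true_and, Finset.mem_union] at *
          tauto
        calc (Finset.univ.filter (fun i => g ∈ A₁ i ∪ A₂ i)).card
            ≤ _ + _ := hsplit
          _ ≤ 1 + 1 := add_le_add (count_le_one A₁ hdisj₁ g) (count_le_one A₂ hdisj₂ g)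
          _ = 2 := rfl
      · calc ∑ i, (A₁ i ∪ A₂ i).card ≤ ∑ i, ((A₁ i).card + (A₂ i).card) :=
              Finset.sum_le_sum (fun i _ => Finset.card_union_le _ _)
          _ = (∑ i, (A₁ i).card) + ∑ i, (A₂ i).card := Finset.sum_add_distrib
          _ ≤ m + m := add_le_add (sum_card_le A₁ hdisj₁) (sum_card_le A₂ hdisj₂)
          _ = 2 * m := by omega
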